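/- For every q ≥ 1, the 1-subdivision of the complete bipartite graph K_{q²,q} contains every graph on at most q vertices as an induced minor. -/
import Mathlib


open SimpleGraph

/-- Maximum degree of a graph on a finite vertex type. -/
noncomputable def maxDeg {V : Type} (G : SimpleGraph V) : ℕ :=
  sSup {d | ∃ v : V, (G.neighborSet v).ncard = d}

/-- `G` has a tree-decomposition of width at most `w`. -/
def HasTreewidthAtMost {V : Type} (G : SimpleGraph V) (w : ℕ) : Prop :=
  ∃ (ι : Type) (T : SimpleGraph ι) (B : ι → Set V),
    T.Connected ∧ T.IsAcyclic ∧
    (∀ v : V, ∃ i, v ∈ B i) ∧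
    (∀ u v : V, G.Adj u v → ∃ i, u ∈ B i ∧ v ∈ B i) ∧
    (∀ v : V, (T.induce {i | v ∈ B i}).Connected) ∧
    (∀ i, (B i).ncard ≤ w + 1)

/-- Treewidth. -/
noncomputable def treewidth {V : Type} (G : SimpleGraph V) : ℕ :=
  sInf {w | HasTreewidthAtMost G w}

/-- The quotient of `G` by the partition given by the fibers of `f`. -/
def quotGraph {V ι : Type} (G : SimpleGraph V) (f : V → ι) : SimpleGraph ι :=
  SimpleGraph.fromRel (fun i j => ∃ u v : V, f u = i ∧ f v = j ∧ G.Adj u v)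

/-- `H` is an induced minor of `G` (branch-set model). -/
def IsInducedMinor {W V : Type} (H : SimpleGraph W) (G : SimpleGraph V) : Prop :=
  ∃ B : W → Set V,
    (∀ w, (B w).Nonempty) ∧
    (∀ w, (G.induce (B w)).Connected) ∧
    (∀ w w', w ≠ w' → Disjoint (B w) (B w')) ∧
    (∀ w w', w ≠ w' →
      (H.Adj w w' ↔ ∃ u ∈ B w, ∃ v ∈ B w', G.Adj u v))

/-- `H` is a minor of `G` (branch-set model). -/
def IsMinor {W V : Type} (H : SimpleGraph W) (G : SimpleGraph V) : Prop :=
  ∃ B : W → Set V,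
    (∀ w, (B w).Nonempty) ∧
    (∀ w, (G.induce (B w)).Connected) ∧
    (∀ w w', w ≠ w' → Disjoint (B w) (B w')) ∧
    (∀ w w', H.Adj w w' → ∃ u ∈ B w, ∃ v ∈ B w', G.Adj u v)

/-- Planarity via Wagner's theorem: no `K₅` and no `K₃,₃` minor. -/
def IsPlanar {V : Type} (G : SimpleGraph V) : Prop :=
  ¬ IsMinor (⊤ : SimpleGraph (Fin 5)) G ∧
  ¬ IsMinor (completeBipartiteGraph (Fin 3) (Fin 3)) G

/-- The 1-subdivision of a graph: each edge is replaced by a path of length 2. -/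
def oneSubdivision {V : Type} (G : SimpleGraph V) : SimpleGraph (V ⊕ G.edgeSet) :=
  SimpleGraph.fromRel (fun a b =>
    ∃ (v : V) (e : G.edgeSet), v ∈ (e : Sym2 V) ∧ a = Sum.inl v ∧ b = Sum.inr e)

/-- Every connected component of the spanning subgraph with edge set `F` that contains
an edge of `F` has at most `c` vertices. -/
def HasClusteredComponents {V : Type} (F : Set (Sym2 V)) (c : ℕ) : Prop :=
  ∀ v : V, (∃ e ∈ F, v ∈ e) →
    {u | (SimpleGraph.fromEdgeSet F).Reachable v u}.ncard ≤ c

/-- `F` is a partition of the edge set of `G` into `h` (possibly empty) classes. -/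
def IsEdgePartition {V : Type} (G : SimpleGraph V) {h : ℕ} (F : Fin h → Set (Sym2 V)) : Prop :=
  (∀ i, F i ⊆ G.edgeSet) ∧ (∀ e ∈ G.edgeSet, ∃! i, e ∈ F i)

/-- Chekuri–Chuzhoy degree-3 treewidth sparsifier, with constant `δ`. -/
def SparsifierHyp (δ : ℝ) : Prop :=
  ∀ (V : Type) [Fintype V] (H : SimpleGraph V),
    ∃ H' : SimpleGraph V, H' ≤ H ∧ maxDeg H' ≤ 3 ∧
      (treewidth H : ℝ) / Real.log (treewidth H) ^ δ ≤ (treewidth H' : ℝ)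

/-- Korhonen's theorem, with constant `γ`: a graph excluding some `k`-vertex planar graph
as an induced minor has treewidth at most `k^γ · 2^(Δ^5)`. -/
def KorhonenHyp (γ : ℝ) : Prop :=
  ∀ (V : Type) [Fintype V] (G : SimpleGraph V) (k : ℕ),
    (∃ H : SimpleGraph (Fin k), IsPlanar H ∧ ¬ IsInducedMinor H G) →
    (treewidth G : ℝ) ≤ (k : ℝ) ^ γ * 2 ^ ((maxDeg G : ℝ) ^ 5)

/-- The graph `G` restricted to the vertex set `S` (kept on the same vertex type). -/
def within {V : Type} (G : SimpleGraph V) (S : Set V) : SimpleGraph V :=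
  SimpleGraph.fromRel (fun a b => a ∈ S ∧ b ∈ S ∧ G.Adj a b)

/-- `IterDepthLE G h d S n` : the iterated-BFS process of width `h`, stopping at weak
diameter at most `d` (measured in `G`), applied to the vertex set `S`, has depth at most `n`
(whatever the choices of BFS roots). -/
inductive IterDepthLE {V : Type} (G : SimpleGraph V) (h d : ℕ) : Set V → ℕ → Prop
  | base (S : Set V) (n : ℕ) :
      (∀ u ∈ S, ∀ v ∈ S, G.dist u v ≤ d) → IterDepthLE G h d S n
  | step (S : Set V) (n : ℕ) :
      (∀ v ∈ S, ∀ i : ℕ,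
        IterDepthLE G h d
          {u | u ∈ S ∧ (within G S).Reachable v u ∧
               i ≤ (within G S).dist v u ∧ (within G S).dist v u < i + h} n) →
      IterDepthLE G h d S (n + 1)

/-- `G` has a tree-partition of width at most `w`. -/
def HasTpwAtMost {V : Type} (G : SimpleGraph V) (w : ℕ) : Prop :=
  ∃ (ι : Type) (T : SimpleGraph ι) (B : ι → Set V),
    T.Connected ∧ T.IsAcyclic ∧
    (∀ v : V, ∃! x, v ∈ B x) ∧
    (∀ u v : V, G.Adj u v → ∃ x y, (x = y ∨ T.Adj x y) ∧ u ∈ B x ∧ v ∈ B y) ∧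
    (∀ x, (B x).ncard ≤ w)

/-- Tree-partition width. -/
noncomputable def tpw {V : Type} (G : SimpleGraph V) : ℕ :=
  sInf {w | HasTpwAtMost G w}

/-- The strong product of two graphs. -/
def strongProd {α β : Type} (G : SimpleGraph α) (H : SimpleGraph β) :
    SimpleGraph (α × β) :=
  SimpleGraph.fromRel (fun x y =>
    (x.1 = y.1 ∨ G.Adj x.1 y.1) ∧ (x.2 = y.2 ∨ H.Adj x.2 y.2))

/-- The Pohoata–Davies `n × n` grid: the `n × n` grid with vertical edges removed and an
apex vertex added for each column, adjacent to all vertices of that column.  A grid vertex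
`(i, j)` lies in column `i` and row `j`. -/
def pdGrid (n : ℕ) : SimpleGraph ((Fin n × Fin n) ⊕ Fin n) :=
  SimpleGraph.fromRel (fun a b =>
    (∃ (i j : Fin n) (hi : (i : ℕ) + 1 < n),
      a = Sum.inl (i, j) ∧ b = Sum.inl (⟨(i : ℕ) + 1, hi⟩, j)) ∨
    (∃ i j : Fin n, a = Sum.inr i ∧ b = Sum.inl (i, j)))

namespace Stmt11Aux

variable {q m : ℕ}

/-- encode an unordered pair from `Fin m` into `Fin (q^2)` -/
def code (hm : m ≤ q) (w u : Fin m) : Fin (q ^ 2) :=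
  ⟨min w.val u.val * q + max w.val u.val, by
    have hmax : max w.val u.val < q := lt_of_lt_of_le (max_lt w.isLt u.isLt) hm
    have hmin : min w.val u.val < q := lt_of_le_of_lt (min_le_max) hmax
    have h2 : min w.val u.val * q + max w.val u.val < (min w.val u.val + 1) * q := by
      rw [add_mul, one_mul]; omega
    have h3 : (min w.val u.val + 1) * q ≤ q * q := Nat.mul_le_mul_right _ (by omega)
    calc min w.val u.val * q + max w.val u.val < (min w.val u.val + 1) * q := h2
      _ ≤ q * q := h3
      _ = q ^ 2 := (sq q).symm⟩

lemma code_comm (hm : m ≤ q) (w u : Fin m) : code hm w u = code hm u w := by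
  simp [code, min_comm, max_comm]

lemma code_inj (hm : m ≤ q) {w u w' u' : Fin m} (h : code hm w u = code hm w' u') :
    min w.val u.val = min w'.val u'.val ∧ max w.val u.val = max w'.val u'.val := by
  have hq : 0 < q := lt_of_le_of_lt (Nat.zero_le _) (lt_of_lt_of_le (max_lt w.isLt u.isLt) hm)
  have hmax : max w.val u.val < q := lt_of_lt_of_le (max_lt w.isLt u.isLt) hm
  have hmax' : max w'.val u'.val < q := lt_of_lt_of_le (max_lt w'.isLt u'.isLt) hm
  have hv : min w.val u.val * q + max w.val u.val
      = min w'.val u'.val * q + max w'.val u'.val := congrArg Fin.val h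
  have h1 : min w.val u.val = min w'.val u'.val := by
    have := congrArg (· / q) hv
    simpa [Nat.add_mul_div_right, Nat.mul_add_div hq, Nat.div_eq_of_lt hmax,
      Nat.div_eq_of_lt hmax', Nat.mul_comm] using this
  refine ⟨h1, ?_⟩
  rw [h1] at hv
  omega

end Stmt11Aux

namespace Stmt11Aux

lemma oneSub_adj {V : Type} (G : SimpleGraph V) (x y : V ⊕ G.edgeSet) :
    (oneSubdivision G).Adj x y ↔
      ∃ (v : V) (e : G.edgeSet), v ∈ (e : Sym2 V) ∧
        ((x = Sum.inl v ∧ y = Sum.inr e) ∨ (y = Sum.inl v ∧ x = Sum.inr e)) := by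
  simp only [oneSubdivision, fromRel_adj]
  constructor
  · rintro ⟨hne, (⟨v, e, hv, hx, hy⟩ | ⟨v, e, hv, hy, hx⟩)⟩
    · exact ⟨v, e, hv, Or.inl ⟨hx, hy⟩⟩
    · exact ⟨v, e, hv, Or.inr ⟨hy, hx⟩⟩
  · rintro ⟨v, e, hv, (⟨hx, hy⟩ | ⟨hy, hx⟩)⟩
    · exact ⟨by simp [hx, hy], Or.inl ⟨v, e, hv, hx, hy⟩⟩
    · exact ⟨by simp [hx, hy], Or.inr ⟨v, e, hv, hy, hx⟩⟩

lemma adj_inl_inr {V : Type} (G : SimpleGraph V) (z : V) (e : G.edgeSet) :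
    (oneSubdivision G).Adj (Sum.inl z) (Sum.inr e) ↔ z ∈ (e : Sym2 V) := by
  rw [oneSub_adj]
  constructor
  · rintro ⟨v, e', hv, (⟨h1, h2⟩ | ⟨h1, h2⟩)⟩
    · obtain rfl : z = v := by injection h1
      obtain rfl : e = e' := by injection h2
      exact hv
    · exact absurd h2 (by simp)
  · intro hz; exact ⟨z, e, hz, Or.inl ⟨rfl, rfl⟩⟩

lemma not_adj_inl_inl {V : Type} (G : SimpleGraph V) (z z' : V) :
    ¬ (oneSubdivision G).Adj (Sum.inl z) (Sum.inl z') := by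
  rw [oneSub_adj]
  rintro ⟨v, e, hv, (⟨h1, h2⟩ | ⟨h1, h2⟩)⟩ <;> simp at h2

lemma not_adj_inr_inr {V : Type} (G : SimpleGraph V) (e e' : G.edgeSet) :
    ¬ (oneSubdivision G).Adj (Sum.inr e) (Sum.inr e') := by
  rw [oneSub_adj]
  rintro ⟨v, f, hv, (⟨h1, h2⟩ | ⟨h1, h2⟩)⟩ <;> simp at h1

end Stmt11Aux


open Stmt11Aux in
/-- the 1-subdivision of `K_{q²,q}` contains every graph on at most `q`
vertices as an induced minor. -/
theorem stmt11 (q : ℕ) (hq : 1 ≤ q) (m : ℕ) (hm : m ≤ q) (H : SimpleGraph (Fin m)) :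
    IsInducedMinor H
      (oneSubdivision (completeBipartiteGraph (Fin (q ^ 2)) (Fin q))) := by
  set G := completeBipartiteGraph (Fin (q ^ 2)) (Fin q) with hG
  set Gs := oneSubdivision G with hGs
  -- embedding of Fin m into Fin q
  let emb : Fin m → Fin q := fun w => ⟨w.val, lt_of_lt_of_le w.isLt hm⟩
  have emb_inj : Function.Injective emb := by
    intro a b h
    exact Fin.ext (by simpa [emb] using congrArg Fin.val h)
  -- the edge vertex for a pair (a, b)
  have hev : ∀ (a : Fin (q ^ 2)) (b : Fin q), s(Sum.inl a, Sum.inr b) ∈ G.edgeSet := by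
    intro a b
    rw [SimpleGraph.mem_edgeSet]
    simp [hG, completeBipartiteGraph]
  let ev : Fin (q ^ 2) → Fin q → G.edgeSet := fun a b => ⟨s(Sum.inl a, Sum.inr b), hev a b⟩
  have ev_inj : ∀ a b a' b', ev a b = ev a' b' → a = a' ∧ b = b' := by
    intro a b a' b' h
    have := congrArg Subtype.val h
    simp only [ev] at this
    rw [Sym2.eq_iff] at this
    rcases this with ⟨h1, h2⟩ | ⟨h1, h2⟩
    · exact ⟨by injection h1, by injection h2⟩
    · exact absurd h1 (by simp)
  have mem_ev : ∀ (a : Fin (q ^ 2)) (b : Fin q) (x : Fin (q ^ 2) ⊕ Fin q),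
      x ∈ ((ev a b : G.edgeSet) : Sym2 (Fin (q ^ 2) ⊕ Fin q)) ↔
        x = Sum.inl a ∨ x = Sum.inr b := by
    intro a b x
    simp [ev, Sym2.mem_iff]
  -- branch sets
  let B : Fin m → Set ((Fin (q ^ 2) ⊕ Fin q) ⊕ G.edgeSet) := fun w =>
    {x | x = Sum.inl (Sum.inr (emb w)) ∨
      (∃ u, H.Adj w u ∧ x = Sum.inr (ev (code hm w u) (emb w))) ∨
      (∃ u, H.Adj w u ∧ w < u ∧ x = Sum.inl (Sum.inl (code hm w u)))}
  have hcent : ∀ w, (Sum.inl (Sum.inr (emb w)) : (Fin (q ^ 2) ⊕ Fin q) ⊕ G.edgeSet) ∈ B w :=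
    fun w => Or.inl rfl
  refine ⟨B, fun w => ⟨_, hcent w⟩, ?_, ?_, ?_⟩
  · -- connectivity
    intro w
    have key : ∀ x : B w, (Gs.induce (B w)).Reachable x ⟨_, hcent w⟩ := by
      rintro ⟨x, (rfl | ⟨u, hu, rfl⟩ | ⟨u, hu, hlt, rfl⟩)⟩
      · exact Reachable.refl _
      · -- s-vertex adjacent to center
        refine Adj.reachable ?_
        show Gs.Adj (Sum.inr (ev (code hm w u) (emb w))) (Sum.inl (Sum.inr (emb w)))
        refine ((adj_inl_inr G _ _).mpr ?_).symm
        rw [mem_ev]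
        exact Or.inr rfl
      · -- a-vertex: via s-vertex
        have hs : (Sum.inr (ev (code hm w u) (emb w)) : (Fin (q ^ 2) ⊕ Fin q) ⊕ G.edgeSet)
            ∈ B w := Or.inr (Or.inl ⟨u, hu, rfl⟩)
        have r1 : (Gs.induce (B w)).Reachable
            ⟨Sum.inl (Sum.inl (code hm w u)), Or.inr (Or.inr ⟨u, hu, hlt, rfl⟩)⟩
            ⟨Sum.inr (ev (code hm w u) (emb w)), hs⟩ := by
          refine Adj.reachable ?_
          show Gs.Adj (Sum.inl (Sum.inl (code hm w u))) (Sum.inr (ev (code hm w u) (emb w)))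
          rw [adj_inl_inr, mem_ev]
          exact Or.inl rfl
        have r2 : (Gs.induce (B w)).Reachable
            ⟨Sum.inr (ev (code hm w u) (emb w)), hs⟩ ⟨_, hcent w⟩ := by
          refine Adj.reachable ?_
          show Gs.Adj (Sum.inr (ev (code hm w u) (emb w))) (Sum.inl (Sum.inr (emb w)))
          refine ((adj_inl_inr G _ _).mpr ?_).symm
          rw [mem_ev]
          exact Or.inr rfl
        exact r1.trans r2
    have : Nonempty ↥(B w) := ⟨⟨_, hcent w⟩⟩
    exact Connected.mk (fun x y => (key x).trans (key y).symm)
  · -- disjointness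
    intro w w' hne
    rw [Set.disjoint_left]
    rintro x (rfl | ⟨u, hu, rfl⟩ | ⟨u, hu, hlt, rfl⟩) (h | ⟨u', hu', h⟩ | ⟨u', hu', hlt', h⟩)
    · exact hne (emb_inj (by injection (by injection h : Sum.inr (emb w) = Sum.inr (emb w'))))
    · simp at h
    · exact absurd (by injection h : Sum.inr (emb w) = Sum.inl (code hm w' u')) (by simp)
    · simp at h
    · obtain ⟨-, h2⟩ := ev_inj _ _ _ _ (by injection h)
      exact hne (emb_inj h2)
    · simp at h
    · exact absurd (by injection h : Sum.inl (code hm w u) = Sum.inr (emb w')) (by simp)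
    · simp at h
    · have hc := code_inj hm (by injection (by injection h :
        Sum.inl (code hm w u) = Sum.inl (code hm w' u')) : code hm w u = code hm w' u')
      have h1 : w.val < u.val := hlt
      have h2 : w'.val < u'.val := hlt'
      have : w.val = w'.val := by
        have := hc.1
        omega
      exact hne (Fin.ext this)
  · -- adjacency characterization
    intro w w' hne
    constructor
    · intro hadj
      rcases lt_or_gt_of_ne hne with hlt | hlt
      · refine ⟨Sum.inl (Sum.inl (code hm w w')), Or.inr (Or.inr ⟨w', hadj, hlt, rfl⟩),
          Sum.inr (ev (code hm w' w) (emb w')), Or.inr (Or.inl ⟨w, hadj.symm, rfl⟩), ?_⟩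
        rw [adj_inl_inr, mem_ev]
        exact Or.inl (by rw [code_comm hm w' w])
      · refine ⟨Sum.inr (ev (code hm w w') (emb w)), Or.inr (Or.inl ⟨w', hadj, rfl⟩),
          Sum.inl (Sum.inl (code hm w' w)), Or.inr (Or.inr ⟨w, hadj.symm, hlt, rfl⟩), ?_⟩
        refine ((adj_inl_inr G _ _).mpr ?_).symm
        rw [mem_ev]
        exact Or.inl (by rw [code_comm hm w w'])
    · rintro ⟨u, hu, v, hv, hadj⟩
      -- helper to conclude from: a-vertex of one side adjacent to s-vertex of other side
      have main : ∀ (a b : Fin m), a ≠ b →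
          ∀ t u', H.Adj a t → H.Adj b u' →
          Gs.Adj (Sum.inl (Sum.inl (code hm a t))) (Sum.inr (ev (code hm b u') (emb b))) →
          H.Adj a b := by
        intro a b hab t u' hat hbu' hadj
        rw [adj_inl_inr, mem_ev] at hadj
        rcases hadj with h | h
        · have hc := code_inj hm (by injection h : code hm a t = code hm b u')
          have h1 : a.val ≠ b.val := fun hh => hab (Fin.ext hh)
          have h2 : min b.val u'.val = b.val ∨ min b.val u'.val = u'.val := by omega
          have h3 : min a.val t.val = a.val ∨ min a.val t.val = t.val := by omega
          -- a.val ∈ {b.val, u'.val} and relate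
          have h4 : a.val = u'.val ∨ t.val = u'.val ∨ (a.val = b.val ∨ t.val = b.val) := by
            have := hc.1
            have := hc.2
            omega
          -- we need: {a,t} = {b,u'} as unordered pairs; since a ≠ b, a = u' or t = b... 
          have hpair : (a.val = b.val ∧ t.val = u'.val) ∨ (a.val = u'.val ∧ t.val = b.val) := by
            have := hc.1
            have := hc.2
            omega
          rcases hpair with ⟨h5, h6⟩ | ⟨h5, h6⟩
          · exact absurd h5 h1
          · have : u' = a := Fin.ext h5.symm
            subst this
            exact hbu'.symm
        · exact absurd h (by simp)
      -- case analysis on memberships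
      rcases hu with rfl | ⟨t, ht, rfl⟩ | ⟨t, ht, hlt, rfl⟩ <;>
        rcases hv with rfl | ⟨t', ht', rfl⟩ | ⟨t', ht', hlt', rfl⟩
      · exact absurd hadj (not_adj_inl_inl G _ _)
      · -- center w vs s-vertex of w'
        rw [adj_inl_inr, mem_ev] at hadj
        rcases hadj with h | h
        · exact absurd h (by simp)
        · have : emb w = emb w' := by injection h
          exact absurd (emb_inj this) hne
      · exact absurd hadj (not_adj_inl_inl G _ _)
      · -- s-vertex of w vs center w'
        have hadj' := hadj.symm
        rw [adj_inl_inr, mem_ev] at hadj'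
        rcases hadj' with h | h
        · exact absurd h (by simp)
        · have : emb w' = emb w := by injection h
          exact absurd (emb_inj this).symm hne
      · exact absurd hadj (not_adj_inr_inr G _ _)
      · -- s-vertex of w vs a-vertex of w'
        exact (main w' w hne.symm t' t ht' ht hadj.symm).symm
      · exact absurd hadj (not_adj_inl_inl G _ _)
      · -- a-vertex of w vs s-vertex of w'
        exact main w w' hne t t' ht ht' hadj
      · exact absurd hadj (not_adj_inl_inl G _ _)
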